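/- Let g ≥ 1 and n ≥ 3, and write B = B_n(Σ_g). Let H be a group and λ : B → H a surjective group homomorphism such that the subgroup of H generated by λ(σ_1),…,λ(σ_{n−1}) is infinite cyclic (isomorphic to ℤ). Then there exists a group isomorphism ι : H → B/Γ_3(B) such that ι ∘ λ is the canonical projection B → B/Γ_3(B), i.e. ι ∘ λ sends every generator of B to its class in B/Γ_3(B). -/

import Mathlib

open scoped commutatorElement


/-- Generators of the braid group `B_n(Σ_g)` of the compact orientable genus-`g`
surface with one boundary component: `a i`, `b i` for `i : Fin g` (the generators
`a_{i+1}, b_{i+1}`) and `s j` for `j : Fin (n-1)` (the generator `σ_{j+1}`). -/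
inductive SurfGen (g n : ℕ) : Type
  | a : Fin g → SurfGen g n
  | b : Fin g → SurfGen g n
  | s : Fin (n - 1) → SurfGen g n

namespace SurfGen

variable {g n : ℕ}

/-- `c false i = a_i` and `c true i = b_i`. -/
def c (t : Bool) (i : Fin g) : SurfGen g n := if t then .b i else .a i

end SurfGen

/-- Relators of the braid group `B_n(Σ_g)` of the compact orientable genus-`g`
surface with one boundary component (generator `σ_1` is `s ⟨0, h⟩`). -/
def surfBraidRels (g n : ℕ) : Set (FreeGroup (SurfGen g n)) :=
  -- σ_i σ_j = σ_j σ_i for |i-j| ≥ 2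
  {r | ∃ i j : Fin (n - 1), (i : ℕ) + 2 ≤ (j : ℕ) ∧
      r = .of (.s i) * .of (.s j) * (.of (.s j) * .of (.s i))⁻¹} ∪
  -- σ_i σ_{i+1} σ_i = σ_{i+1} σ_i σ_{i+1}
  {r | ∃ i j : Fin (n - 1), (i : ℕ) + 1 = (j : ℕ) ∧
      r = .of (.s i) * .of (.s j) * .of (.s i) *
        (.of (.s j) * .of (.s i) * .of (.s j))⁻¹} ∪
  -- c_i σ_j = σ_j c_i for j ≥ 2
  {r | ∃ (t : Bool) (i : Fin g) (j : Fin (n - 1)), 1 ≤ (j : ℕ) ∧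
      r = .of (.c t i) * .of (.s j) * (.of (.s j) * .of (.c t i))⁻¹} ∪
  -- c_i σ_1 c_i σ_1 = σ_1 c_i σ_1 c_i
  {r | ∃ (t : Bool) (i : Fin g) (h : 0 < n - 1),
      r = .of (.c t i) * .of (.s ⟨0, h⟩) * .of (.c t i) * .of (.s ⟨0, h⟩) *
        (.of (.s ⟨0, h⟩) * .of (.c t i) * .of (.s ⟨0, h⟩) * .of (.c t i))⁻¹} ∪
  -- a_i σ_1 b_i = σ_1 b_i σ_1 a_i σ_1
  {r | ∃ (i : Fin g) (h : 0 < n - 1),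
      r = .of (.a i) * .of (.s ⟨0, h⟩) * .of (.b i) *
        (.of (.s ⟨0, h⟩) * .of (.b i) * .of (.s ⟨0, h⟩) * .of (.a i) * .of (.s ⟨0, h⟩))⁻¹} ∪
  -- c_i σ_1⁻¹ c_j σ_1 = σ_1⁻¹ c_j σ_1 c_i for j < i
  {r | ∃ (t t' : Bool) (i j : Fin g) (h : 0 < n - 1), (j : ℕ) < (i : ℕ) ∧
      r = .of (.c t i) * (.of (.s ⟨0, h⟩))⁻¹ * .of (.c t' j) * .of (.s ⟨0, h⟩) *
        ((.of (.s ⟨0, h⟩))⁻¹ * .of (.c t' j) * .of (.s ⟨0, h⟩) * .of (.c t i))⁻¹}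

/-- The braid group `B_n(Σ_g)` of the compact orientable genus-`g` surface with
one boundary component, as a presented group. -/
abbrev SurfBraidGroup (g n : ℕ) := PresentedGroup (surfBraidRels g n)


section GroupLemmas
variable {G : Type*} [Group G]

lemma braid_eq_of_commute {x y : G} (hc : x * y = y * x)
    (h : x * y * x = y * x * y) : x = y := by
  rw [hc] at h
  exact mul_left_cancel h

lemma exchange_aux {z a b : G} (hza : Commute z a)
    (h : b * a = z * (a * b)) (l : ℤ) :
    b * a ^ l = z ^ l * (a ^ l * b) := by
  have hsc : SemiconjBy b a (z * a) := by
    unfold SemiconjBy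
    rw [h, mul_assoc]
  have h2 := hsc.zpow_right l
  unfold SemiconjBy at h2
  rw [h2, hza.mul_zpow, mul_assoc]

lemma exchange_inv {z a b : G} (hzb : Commute z b)
    (h : b * a = z * (a * b)) : b⁻¹ * a = z⁻¹ * (a * b⁻¹) := by
  have h0 : a * b = z⁻¹ * (b * a) := by rw [h]; group
  calc b⁻¹ * a = b⁻¹ * (a * b) * b⁻¹ := by group
    _ = b⁻¹ * (z⁻¹ * (b * a)) * b⁻¹ := by rw [h0]
    _ = b⁻¹ * z⁻¹ * b * (a * b⁻¹) := by group
    _ = z⁻¹ * (a * b⁻¹) := by rw [(hzb.inv_left.inv_right).symm.eq]; group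

end GroupLemmas

section CanProd
variable {g : ℕ} {G : Type*} [Group G]

/-- Ordered product `∏ i, A i ^ x i` for a commuting family. -/
def canProd (A : Fin g → G) (hA : ∀ i j, Commute (A i) (A j)) (x : Fin g → ℤ) : G :=
  Finset.univ.noncommProd (fun i => A i ^ x i)
    (fun i _ j _ _ => (hA i j).zpow_zpow _ _)

/-- The product with the `j`-th factor removed. -/
def restProd (A : Fin g → G) (hA : ∀ i j, Commute (A i) (A j)) (j : Fin g)
    (x : Fin g → ℤ) : G :=
  (Finset.univ.erase j).noncommProd (fun i => A i ^ x i)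
    (fun i _ j _ _ => (hA i j).zpow_zpow _ _)

variable (A : Fin g → G) (hA : ∀ i j, Commute (A i) (A j))

lemma canProd_commute (y : G) (h : ∀ i, Commute y (A i)) (x : Fin g → ℤ) :
    Commute y (canProd A hA x) :=
  Finset.noncommProd_commute _ _ _ _ (fun i _ => (h i).zpow_right _)

lemma restProd_commute (j : Fin g) (y : G) (h : ∀ i, i ≠ j → Commute y (A i))
    (x : Fin g → ℤ) : Commute y (restProd A hA j x) :=
  Finset.noncommProd_commute _ _ _ _
    (fun i hi => (h i (Finset.mem_erase.mp hi).1).zpow_right _)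

lemma canProd_zero : canProd A hA 0 = 1 := by
  unfold canProd
  exact (Finset.noncommProd_eq_pow_card _ _ _ 1 (by simp)).trans (one_pow _)

lemma restProd_congr (j : Fin g) (x x' : Fin g → ℤ) (h : ∀ i, i ≠ j → x i = x' i) :
    restProd A hA j x = restProd A hA j x' := by
  unfold restProd
  exact Finset.noncommProd_congr rfl
    (fun i hi => by rw [h i (Finset.mem_erase.mp hi).1]) _

lemma canProd_split (j : Fin g) (x : Fin g → ℤ) :
    canProd A hA x = A j ^ x j * restProd A hA j x :=
  (Finset.mul_noncommProd_erase Finset.univ (Finset.mem_univ j) _ _).symm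

lemma canProd_add_single (j : Fin g) (c : ℤ) (x : Fin g → ℤ) :
    canProd A hA (x + Pi.single j c) = canProd A hA x * A j ^ c := by
  rw [canProd_split A hA j, canProd_split A hA j x]
  have h1 : (x + Pi.single j c : Fin g → ℤ) j = x j + c := by simp
  have h2 : restProd A hA j (x + Pi.single j c) = restProd A hA j x :=
    restProd_congr A hA j _ x (fun i hij => by simp [Pi.single_eq_of_ne hij])
  rw [h1, h2, zpow_add]
  have hcomm : Commute (A j ^ c) (restProd A hA j x) :=
    restProd_commute A hA j _ (fun i _ => (hA j i).zpow_left c) x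
  rw [mul_assoc, hcomm.eq, ← mul_assoc]

lemma canProd_move (y z : G) (j : Fin g) (hyA : ∀ i, i ≠ j → Commute y (A i))
    (hzAj : Commute z (A j)) (hrel : y * A j = z * (A j * y)) (x : Fin g → ℤ) :
    y * canProd A hA x = z ^ (x j) * (canProd A hA x * y) := by
  rw [canProd_split A hA j x]
  have hrest : Commute y (restProd A hA j x) := restProd_commute A hA j y hyA x
  calc y * (A j ^ x j * restProd A hA j x)
      = (y * A j ^ x j) * restProd A hA j x := by rw [mul_assoc]
    _ = (z ^ x j * (A j ^ x j * y)) * restProd A hA j x := by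
        rw [exchange_aux hzAj hrel]
    _ = z ^ x j * (A j ^ x j * (y * restProd A hA j x)) := by group
    _ = z ^ x j * (A j ^ x j * (restProd A hA j x * y)) := by rw [hrest.eq]
    _ = z ^ x j * (A j ^ x j * restProd A hA j x * y) := by group

end CanProd

namespace Stmt17Aux

variable {g n : ℕ} {G : Type*} [Group G]

lemma mk_rel_one {r : FreeGroup (SurfGen g n)} (hr : r ∈ surfBraidRels g n) :
    PresentedGroup.mk (surfBraidRels g n) r = 1 :=
  (QuotientGroup.eq_one_iff _).mpr (Subgroup.subset_normalClosure hr)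

lemma frel_one (f : SurfBraidGroup g n →* G) {r : FreeGroup (SurfGen g n)}
    (hr : r ∈ surfBraidRels g n) : f (PresentedGroup.mk (surfBraidRels g n) r) = 1 := by
  rw [mk_rel_one hr, map_one]

variable (f : SurfBraidGroup g n →* G)

lemma frel_braid (i j : Fin (n - 1)) (hij : (i : ℕ) + 1 = (j : ℕ)) :
    f (.of (.s i)) * f (.of (.s j)) * f (.of (.s i)) =
      f (.of (.s j)) * f (.of (.s i)) * f (.of (.s j)) := by
  have h := frel_one f (g := g) (n := n)
    (Or.inl (Or.inl (Or.inl (Or.inl (Or.inr ⟨i, j, hij, rfl⟩)))))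
  simp only [map_mul, map_inv] at h
  rwa [mul_inv_eq_one] at h

lemma frel_cs (t : Bool) (i : Fin g) (j : Fin (n - 1)) (hj : 1 ≤ (j : ℕ)) :
    f (.of (.c t i)) * f (.of (.s j)) = f (.of (.s j)) * f (.of (.c t i)) := by
  have h := frel_one f (g := g) (n := n)
    (Or.inl (Or.inl (Or.inl (Or.inr ⟨t, i, j, hj, rfl⟩))))
  simp only [map_mul, map_inv] at h
  rwa [mul_inv_eq_one] at h

lemma frel_asb (i : Fin g) (h0 : 0 < n - 1) :
    f (.of (.a i)) * f (.of (.s ⟨0, h0⟩)) * f (.of (.b i)) =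
      f (.of (.s ⟨0, h0⟩)) * f (.of (.b i)) * f (.of (.s ⟨0, h0⟩)) * f (.of (.a i)) *
        f (.of (.s ⟨0, h0⟩)) := by
  have h := frel_one f (g := g) (n := n) (Or.inl (Or.inr ⟨i, h0, rfl⟩))
  simp only [map_mul, map_inv] at h
  rwa [mul_inv_eq_one] at h

lemma frel_cross (t t' : Bool) (i j : Fin g) (h0 : 0 < n - 1) (hji : (j : ℕ) < (i : ℕ)) :
    f (.of (.c t i)) * (f (.of (.s ⟨0, h0⟩)))⁻¹ * f (.of (.c t' j)) * f (.of (.s ⟨0, h0⟩)) =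
      (f (.of (.s ⟨0, h0⟩)))⁻¹ * f (.of (.c t' j)) * f (.of (.s ⟨0, h0⟩)) *
        f (.of (.c t i)) := by
  have h := frel_one f (g := g) (n := n) (Or.inr ⟨t, t', i, j, h0, hji, rfl⟩)
  simp only [map_mul, map_inv] at h
  rwa [mul_inv_eq_one] at h

end Stmt17Aux

namespace Stmt17Aux

section Derived
variable {g n : ℕ} {G : Type*} [Group G]
variable (f : SurfBraidGroup g n →* G) (h0 : 0 < n - 1) (h1 : 1 < n - 1)
  (hall : ∀ j : Fin (n - 1), f (.of (.s j)) = f (.of (.s ⟨0, h0⟩)))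

include h0 h1 hall in
lemma dS_c (t : Bool) (i : Fin g) :
    Commute (f (.of (.s ⟨0, h0⟩))) (f (.of (.c t i))) := by
  have h := frel_cs f t i ⟨1, h1⟩ (le_refl 1)
  rw [hall ⟨1, h1⟩] at h
  exact h.symm

include h0 h1 hall in
lemma dS_a (i : Fin g) : Commute (f (.of (.s ⟨0, h0⟩))) (f (.of (.a i))) :=
  dS_c f h0 h1 hall false i

include h0 h1 hall in
lemma dS_b (i : Fin g) : Commute (f (.of (.s ⟨0, h0⟩))) (f (.of (.b i))) :=
  dS_c f h0 h1 hall true i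

include h0 h1 hall in
lemma dcc (t t' : Bool) (i j : Fin g) (hji : (j : ℕ) < (i : ℕ)) :
    Commute (f (.of (.c t i))) (f (.of (.c t' j))) := by
  have h := frel_cross f t t' i j h0 hji
  simp only [mul_assoc] at h
  have e : (f (.of (.s ⟨0, h0⟩)))⁻¹ * (f (.of (.c t' j)) * f (.of (.s ⟨0, h0⟩)))
      = f (.of (.c t' j)) := by
    rw [← (dS_c f h0 h1 hall t' j).eq]; group
  show f (.of (.c t i)) * f (.of (.c t' j)) = f (.of (.c t' j)) * f (.of (.c t i))
  calc f (.of (.c t i)) * f (.of (.c t' j))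
      = f (.of (.c t i)) * ((f (.of (.s ⟨0, h0⟩)))⁻¹ *
          (f (.of (.c t' j)) * f (.of (.s ⟨0, h0⟩)))) := by rw [e]
    _ = (f (.of (.s ⟨0, h0⟩)))⁻¹ * (f (.of (.c t' j)) *
          (f (.of (.s ⟨0, h0⟩)) * f (.of (.c t i)))) := h
    _ = ((f (.of (.s ⟨0, h0⟩)))⁻¹ * (f (.of (.c t' j)) * f (.of (.s ⟨0, h0⟩)))) *
          f (.of (.c t i)) := by group
    _ = f (.of (.c t' j)) * f (.of (.c t i)) := by rw [e]

include h0 h1 hall in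
lemma dab (i : Fin g) :
    f (.of (.a i)) * f (.of (.b i)) =
      f (.of (.s ⟨0, h0⟩)) * (f (.of (.s ⟨0, h0⟩)) * (f (.of (.b i)) * f (.of (.a i)))) := by
  have h := frel_asb f i h0
  simp only [mul_assoc] at h
  have hSA : f (.of (.s ⟨0, h0⟩)) * f (.of (.a i)) = f (.of (.a i)) * f (.of (.s ⟨0, h0⟩)) :=
    (dS_a f h0 h1 hall i).eq
  have hSB : f (.of (.s ⟨0, h0⟩)) * f (.of (.b i)) = f (.of (.b i)) * f (.of (.s ⟨0, h0⟩)) :=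
    (dS_b f h0 h1 hall i).eq
  calc f (.of (.a i)) * f (.of (.b i))
      = f (.of (.a i)) * (f (.of (.s ⟨0, h0⟩)) * f (.of (.b i))) *
          (f (.of (.s ⟨0, h0⟩)))⁻¹ := by rw [hSB]; group
    _ = f (.of (.s ⟨0, h0⟩)) * (f (.of (.b i)) * (f (.of (.s ⟨0, h0⟩)) *
          (f (.of (.a i)) * f (.of (.s ⟨0, h0⟩))))) * (f (.of (.s ⟨0, h0⟩)))⁻¹ := by
        rw [h]
    _ = f (.of (.s ⟨0, h0⟩)) * (f (.of (.b i)) * (f (.of (.s ⟨0, h0⟩)) * f (.of (.a i)))) := by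
        group
    _ = f (.of (.s ⟨0, h0⟩)) * (f (.of (.b i)) * (f (.of (.a i)) * f (.of (.s ⟨0, h0⟩)))) := by
        rw [hSA]
    _ = f (.of (.s ⟨0, h0⟩)) * (f (.of (.b i)) * (f (.of (.s ⟨0, h0⟩)) * f (.of (.a i)))) := by
        rw [← hSA]
    _ = f (.of (.s ⟨0, h0⟩)) * (f (.of (.b i)) * f (.of (.s ⟨0, h0⟩)) * f (.of (.a i))) := by
        group
    _ = f (.of (.s ⟨0, h0⟩)) * (f (.of (.s ⟨0, h0⟩)) * f (.of (.b i)) * f (.of (.a i))) := by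
        rw [hSB]
    _ = f (.of (.s ⟨0, h0⟩)) * (f (.of (.s ⟨0, h0⟩)) * (f (.of (.b i)) * f (.of (.a i)))) := by
        group

end Derived
end Stmt17Aux

namespace Stmt17Aux

section GroupLemmas2
variable {G : Type*} [Group G]

lemma exchange_aux' {z a b : G} (hza : Commute z a) (hzb : Commute z b)
    (h : b * a = z * (a * b)) (m : ℤ) :
    b ^ m * a = z ^ m * (a * b ^ m) := by
  have h' : a * b = z⁻¹ * (b * a) := by rw [h]; group
  have h2 := exchange_aux hzb.inv_left h' m
  rw [h2]; group

lemma all_eq_of_consec {m : ℕ} (F : Fin m → G) (h0 : 0 < m)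
    (hc : ∀ (v : ℕ) (h : v + 1 < m), F ⟨v + 1, h⟩ = F ⟨v, by omega⟩) :
    ∀ j : Fin m, F j = F ⟨0, h0⟩ := by
  rintro ⟨v, hv⟩
  induction v with
  | zero => rfl
  | succ v ih => rw [hc v hv]; exact ih (by omega)

end GroupLemmas2

section QSide
variable {g n : ℕ}

local notation "π" => QuotientGroup.mk' (Subgroup.lowerCentralSeries (⊤ : Subgroup (SurfBraidGroup g n)) 2)

lemma pi_comm_central (u v w : SurfBraidGroup g n) :
    Commute (π ⁅u, v⁆) (π w) := by
  rw [← commutatorElement_eq_one_iff_commute, ← map_commutatorElement]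
  refine (QuotientGroup.eq_one_iff _).mpr ?_
  have h1 : ⁅u, v⁆ ∈ Subgroup.lowerCentralSeries (⊤ : Subgroup (SurfBraidGroup g n)) 1 := by
    rw [Subgroup.top_lowerCentralSeries_one]
    exact Subgroup.commutator_mem_commutator (Subgroup.mem_top u) (Subgroup.mem_top v)
  rw [Subgroup.lowerCentralSeries_succ]
  exact Subgroup.commutator_mem_commutator h1 (Subgroup.mem_top w)

lemma sigma_succ_Q (i j : Fin (n - 1)) (hij : (i : ℕ) + 1 = (j : ℕ)) :
    π (.of (.s j)) = π (.of (.s i)) := by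
  have hB : (PresentedGroup.of (SurfGen.s j) : SurfBraidGroup g n) =
      .of (.s i) * ⁅((PresentedGroup.of (SurfGen.s i) : SurfBraidGroup g n))⁻¹,
        (PresentedGroup.of (SurfGen.s i) : SurfBraidGroup g n) * .of (.s j)⁆ := by
    rw [commutatorElement_def]
    have h := frel_braid (MonoidHom.id (SurfBraidGroup g n)) i j hij
    simp only [MonoidHom.id_apply] at h
    calc (PresentedGroup.of (SurfGen.s j) : SurfBraidGroup g n)
        = (.of (.s j) * .of (.s i) * .of (.s j)) * ((.of (.s i) : SurfBraidGroup g n) * .of (.s j))⁻¹ := by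
          group
      _ = (.of (.s i) * .of (.s j) * .of (.s i)) * ((.of (.s i) : SurfBraidGroup g n) * .of (.s j))⁻¹ := by
          rw [h]
      _ = _ := by group
  set x := π (.of (.s i)) with hx
  set z := π ⁅((PresentedGroup.of (SurfGen.s i) : SurfBraidGroup g n))⁻¹,
        (PresentedGroup.of (SurfGen.s i) : SurfBraidGroup g n) * .of (.s j)⁆ with hz
  have hy : π (.of (.s j)) = x * z := by rw [hB, map_mul]
  have hzx : Commute z x := pi_comm_central _ _ _
  have hb := frel_braid π i j hij
  rw [hy, ← hx] at hb
  have e1 : x * (x * z) * x = x * x * x * z := by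
    calc x * (x * z) * x = x * x * (z * x) := by group
      _ = x * x * (x * z) := by rw [hzx.eq]
      _ = x * x * x * z := by group
  have e2 : x * z * x * (x * z) = x * x * x * (z * z) := by
    calc x * z * x * (x * z) = x * (z * x) * (x * z) := by group
      _ = x * (x * z) * (x * z) := by rw [hzx.eq]
      _ = x * x * ((z * x) * z) := by group
      _ = x * x * ((x * z) * z) := by rw [hzx.eq]
      _ = x * x * x * (z * z) := by group
  rw [e1, e2] at hb
  rw [show x * x * x * z = x * (x * (x * z)) by group,
    show x * x * x * (z * z) = x * (x * (x * (z * z))) by group] at hb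
  have h3 : z = z * z := mul_left_cancel (mul_left_cancel (mul_left_cancel hb))
  have hz1 : z = 1 := left_eq_mul.mp h3
  rw [hy, hz1, mul_one]

end QSide
end Stmt17Aux

namespace Stmt17Aux
section TopClosure
variable {g n : ℕ}

lemma top_closure_of_surj {G' : Type*} [Group G'] (f : SurfBraidGroup g n →* G')
    (hf : Function.Surjective f) :
    Subgroup.closure (Set.range fun x : SurfGen g n => f (.of x)) = ⊤ := by
  have h : (Set.range fun x : SurfGen g n => f (.of x)) =
      f '' Set.range (PresentedGroup.of : SurfGen g n → SurfBraidGroup g n) := by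
    rw [← Set.range_comp]; rfl
  rw [h, ← MonoidHom.map_closure, PresentedGroup.closure_range_of, ← MonoidHom.range_eq_map]
  exact MonoidHom.range_eq_top.mpr hf

end TopClosure
end Stmt17Aux

open Stmt17Aux in
/-- Any surjection `λ : B_n(Σ_g) → H` under which the images of the
`σ_i` generate an infinite cyclic subgroup is, up to an isomorphism `H ≅ B/Γ₃(B)`,
the canonical projection onto `B/Γ₃(B)`. -/
theorem stmt17 (g n : ℕ) (hg : 1 ≤ g) (hn : 3 ≤ n) {H : Type*} [Group H]
    (lam : SurfBraidGroup g n →* H) (hsurj : Function.Surjective lam)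
    (hcyc : Nonempty (↥(Subgroup.closure
        (Set.range fun j : Fin (n - 1) => lam (PresentedGroup.of (SurfGen.s j)))) ≃*
      Multiplicative ℤ)) :
    ∃ ι : H ≃* (SurfBraidGroup g n ⧸ Subgroup.lowerCentralSeries (⊤ : Subgroup (SurfBraidGroup g n)) 2),
      ι.toMonoidHom.comp lam =
        QuotientGroup.mk' (Subgroup.lowerCentralSeries (⊤ : Subgroup (SurfBraidGroup g n)) 2) := by
  classical
  obtain ⟨e⟩ := hcyc
  have h0 : 0 < n - 1 := by omega
  have h1 : 1 < n - 1 := by omega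
  have hmemC : ∀ j : Fin (n - 1), lam (.of (.s j)) ∈ Subgroup.closure
      (Set.range fun j : Fin (n - 1) => lam (PresentedGroup.of (SurfGen.s j))) :=
    fun j => Subgroup.subset_closure ⟨j, rfl⟩
  have hcommσ : ∀ i j : Fin (n - 1),
      lam (.of (.s i)) * lam (.of (.s j)) = lam (.of (.s j)) * lam (.of (.s i)) := by
    intro i j
    have h : e (⟨_, hmemC i⟩ * ⟨_, hmemC j⟩) = e (⟨_, hmemC j⟩ * ⟨_, hmemC i⟩) := by
      rw [map_mul, map_mul, mul_comm]
    exact congrArg Subtype.val (e.injective h)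
  have hallH : ∀ j : Fin (n - 1), lam (.of (.s j)) = lam (.of (.s ⟨0, h0⟩)) := by
    apply all_eq_of_consec (fun j : Fin (n - 1) => lam (.of (.s j))) h0
    intro v hv
    exact (braid_eq_of_commute (hcommσ ⟨v, by omega⟩ ⟨v + 1, hv⟩)
      (frel_braid lam ⟨v, by omega⟩ ⟨v + 1, hv⟩ rfl)).symm
  set s0 := lam (PresentedGroup.of (SurfGen.s ⟨0, h0⟩)) with hs0def
  -- s0 has infinite order
  have hord : ∀ c : ℤ, s0 ^ c = 1 → c = 0 := by
    intro c hc
    set c0 : ↥(Subgroup.closure (Set.range fun j : Fin (n - 1) =>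
        lam (PresentedGroup.of (SurfGen.s j)))) := ⟨s0, hmemC ⟨0, h0⟩⟩ with hc0def
    have hc0pow : c0 ^ c = 1 := by
      apply Subtype.ext
      rw [SubgroupClass.coe_zpow]
      exact hc
    have ht : (e c0) ^ c = 1 := by rw [← map_zpow, hc0pow, map_one]
    have ht2 : c * (e c0).toAdd = 0 := by
      have := congrArg Multiplicative.toAdd ht
      rwa [toAdd_zpow, toAdd_one, zsmul_eq_mul] at this
    rcases mul_eq_zero.mp ht2 with h | h
    · exact h
    · exfalso
      have hec0 : e c0 = 1 := by
        have h2 := congrArg Multiplicative.ofAdd h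
        simpa using h2
      have hc01 : c0 = 1 := by
        apply e.injective; rw [hec0, map_one]
      have hs01 : s0 = 1 := congrArg Subtype.val hc01
      have hCbot : Subgroup.closure (Set.range fun j : Fin (n - 1) =>
          lam (PresentedGroup.of (SurfGen.s j))) ≤ ⊥ := by
        rw [Subgroup.closure_le]
        rintro _ ⟨j, rfl⟩
        rw [SetLike.mem_coe, Subgroup.mem_bot]
        show lam (.of (.s j)) = 1
        rw [hallH j, hs01]
      have hu := hCbot (e.symm (Multiplicative.ofAdd 1)).2
      rw [Subgroup.mem_bot] at hu
      have h3 : e.symm (Multiplicative.ofAdd 1) = 1 := Subtype.ext hu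
      have h4 : Multiplicative.ofAdd (1 : ℤ) = 1 := by
        rw [← e.apply_symm_apply (Multiplicative.ofAdd (1 : ℤ)), h3, map_one]
      simp at h4
  -- s0 is central
  have hHtop := top_closure_of_surj lam hsurj
  have hs0comm : ∀ hh : H, Commute s0 hh := by
    intro hh
    have hmem : hh ∈ Subgroup.closure (Set.range fun x : SurfGen g n => lam (.of x)) := by
      rw [hHtop]; exact Subgroup.mem_top hh
    refine Subgroup.closure_induction (p := fun y _ => Commute s0 y) ?_ (Commute.one_right s0)
      (fun a b _ _ ha hb => ha.mul_right hb) (fun a _ ha => ha.inv_right) hmem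
    rintro y ⟨u, rfl⟩
    cases u with
    | a i => exact dS_a lam h0 h1 hallH i
    | b i => exact dS_b lam h0 h1 hallH i
    | s j =>
      show Commute s0 (lam (.of (.s j)))
      rw [hallH j]
  have hs0Z : s0 ∈ Subgroup.center H :=
    Subgroup.mem_center_iff.mpr fun h => (hs0comm h).symm
  have hcq : ∀ {p q : H}, Commute p q → ⁅p, q⁆ ∈ Subgroup.center H := fun h => by
    rw [commutatorElement_eq_one_iff_commute.mpr h]; exact Subgroup.one_mem _
  have hccne : ∀ (t t' : Bool) (i j : Fin g), i ≠ j →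
      Commute (lam (.of (.c t i))) (lam (.of (.c t' j))) := by
    intro t t' i j hne
    rcases Nat.lt_or_ge (i : ℕ) (j : ℕ) with hlt | hge
    · exact (dcc lam h0 h1 hallH t' t j i hlt).symm
    · have hji : (j : ℕ) < (i : ℕ) :=
        lt_of_le_of_ne hge (fun hh => hne (Fin.ext hh.symm))
      exact dcc lam h0 h1 hallH t t' i j hji
  have habS2 : ∀ i : Fin g, ⁅lam (.of (.a i)), lam (.of (.b i))⁆ = s0 * s0 := by
    intro i
    rw [commutatorElement_def, dab lam h0 h1 hallH i]
    group
    rfl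
  have hgenZ : ∀ u v : SurfGen g n, ⁅lam (.of u), lam (.of v)⁆ ∈ Subgroup.center H := by
    intro u v
    cases u with
    | a i =>
      cases v with
      | a j =>
        by_cases hij : i = j
        · subst hij; exact hcq (Commute.refl _)
        · exact hcq (hccne false false i j hij)
      | b j =>
        by_cases hij : i = j
        · subst hij; rw [habS2 i]; exact mul_mem hs0Z hs0Z
        · exact hcq (hccne false true i j hij)
      | s j =>
        refine hcq ?_
        show Commute _ (lam (.of (.s j)))
        rw [hallH j]
        exact (hs0comm _).symm
    | b i =>
      cases v with
      | a j =>
        by_cases hij : i = j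
        · subst hij
          rw [← commutatorElement_inv]
          exact inv_mem (by rw [habS2 i]; exact mul_mem hs0Z hs0Z)
        · exact hcq (hccne true false i j hij)
      | b j =>
        by_cases hij : i = j
        · subst hij; exact hcq (Commute.refl _)
        · exact hcq (hccne true true i j hij)
      | s j =>
        refine hcq ?_
        show Commute _ (lam (.of (.s j)))
        rw [hallH j]
        exact (hs0comm _).symm
    | s i =>
      cases v with
      | a j =>
        refine hcq ?_
        show Commute (lam (.of (.s i))) _
        rw [hallH i]
        exact hs0comm _
      | b j =>
        refine hcq ?_
        show Commute (lam (.of (.s i))) _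
        rw [hallH i]
        exact hs0comm _
      | s j => exact hcq (hcommσ i j)
  have hψtop := top_closure_of_surj ((QuotientGroup.mk' (Subgroup.center H)).comp lam)
    ((QuotientGroup.mk'_surjective (Subgroup.center H)).comp hsurj)
  have hcommQZ : ∀ p q : H ⧸ Subgroup.center H, Commute p q := by
    intro p q
    have hp : p ∈ Subgroup.closure (Set.range fun x : SurfGen g n =>
        ((QuotientGroup.mk' (Subgroup.center H)).comp lam) (.of x)) := by
      rw [hψtop]; exact Subgroup.mem_top p
    have hq : q ∈ Subgroup.closure (Set.range fun x : SurfGen g n =>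
        ((QuotientGroup.mk' (Subgroup.center H)).comp lam) (.of x)) := by
      rw [hψtop]; exact Subgroup.mem_top q
    refine Subgroup.closure_induction₂ (p := fun a b _ _ => Commute a b) ?_
      (fun x _ => Commute.one_left x) (fun x _ => Commute.one_right x)
      (fun x y z _ _ _ hxz hyz => hxz.mul_left hyz)
      (fun y z x _ _ _ hxy hxz => hxy.mul_right hxz)
      (fun x y _ _ h => h.inv_left) (fun x y _ _ h => h.inv_right) hp hq
    rintro _ _ ⟨u, rfl⟩ ⟨v, rfl⟩
    rw [← commutatorElement_eq_one_iff_commute, ← map_commutatorElement]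
    exact (QuotientGroup.eq_one_iff _).mpr (by rw [map_commutatorElement]; exact hgenZ u v)
  have hcommZ : ∀ p q : H, ⁅p, q⁆ ∈ Subgroup.center H := by
    intro p q
    have hone : (QuotientGroup.mk' (Subgroup.center H)) ⁅p, q⁆ = 1 := by
      rw [map_commutatorElement]
      exact commutatorElement_eq_one_iff_commute.mpr (hcommQZ _ _)
    exact (QuotientGroup.eq_one_iff _).mp hone
  have hlcsH : Subgroup.lowerCentralSeries (⊤ : Subgroup H) 2 = ⊥ := by
    have hl1 : Subgroup.lowerCentralSeries (⊤ : Subgroup H) 1 ≤ Subgroup.center H := by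
      rw [Subgroup.top_lowerCentralSeries_one, commutator_def]
      exact Subgroup.commutator_le.mpr fun p _ q _ => hcommZ p q
    have h2 : Subgroup.lowerCentralSeries (⊤ : Subgroup H) 2 ≤ ⁅Subgroup.center H, (⊤ : Subgroup H)⁆ := by
      rw [Subgroup.lowerCentralSeries_succ]
      exact Subgroup.commutator_mono hl1 le_rfl
    have h3 : ⁅Subgroup.center H, (⊤ : Subgroup H)⁆ = ⊥ :=
      Subgroup.commutator_eq_bot_iff_le_centralizer.mpr (Subgroup.center_le_centralizer _)
    exact le_bot_iff.mp (h3 ▸ h2)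
  have hΓk : Subgroup.lowerCentralSeries (⊤ : Subgroup (SurfBraidGroup g n)) 2 ≤ lam.ker := by
    intro w hw
    have h2 : lam w ∈ (⊤ : Subgroup H).lowerCentralSeries 2 := by
      rw [← Subgroup.map_top_of_surjective lam hsurj, ← Subgroup.map_lowerCentralSeries]
      exact Subgroup.mem_map_of_mem lam hw
    rw [hlcsH, Subgroup.mem_bot] at h2
    exact h2
  -- Q side
  set prj := QuotientGroup.mk' (Subgroup.lowerCentralSeries (⊤ : Subgroup (SurfBraidGroup g n)) 2) with hprj
  have hallQ : ∀ j : Fin (n - 1), prj (.of (.s j)) = prj (.of (.s ⟨0, h0⟩)) :=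
    all_eq_of_consec (fun j : Fin (n - 1) => prj (.of (.s j))) h0
      (fun v hv => sigma_succ_Q ⟨v, by omega⟩ ⟨v + 1, hv⟩ rfl)
  set Sq := prj (PresentedGroup.of (SurfGen.s ⟨0, h0⟩)) with hSqdef
  set A : Fin g → SurfBraidGroup g n ⧸ Subgroup.lowerCentralSeries (⊤ : Subgroup (SurfBraidGroup g n)) 2 :=
    fun i => prj (PresentedGroup.of (SurfGen.a i)) with hAdef
  set Bb : Fin g → SurfBraidGroup g n ⧸ Subgroup.lowerCentralSeries (⊤ : Subgroup (SurfBraidGroup g n)) 2 :=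
    fun i => prj (PresentedGroup.of (SurfGen.b i)) with hBbdef
  have hSA : ∀ i, Commute Sq (A i) := fun i => dS_a prj h0 h1 hallQ i
  have hSB : ∀ i, Commute Sq (Bb i) := fun i => dS_b prj h0 h1 hallQ i
  have hABne : ∀ i j : Fin g, i ≠ j → Commute (A i) (Bb j) := by
    intro i j hne
    rcases Nat.lt_or_ge (i : ℕ) (j : ℕ) with hlt | hge
    · exact (dcc prj h0 h1 hallQ true false j i hlt).symm
    · exact dcc prj h0 h1 hallQ false true i j
        (lt_of_le_of_ne hge (fun hh => hne (Fin.ext hh.symm)))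
  have hAA : ∀ i j, Commute (A i) (A j) := by
    intro i j
    rcases Nat.lt_trichotomy (i : ℕ) (j : ℕ) with hlt | heq | hgt
    · exact (dcc prj h0 h1 hallQ false false j i hlt).symm
    · have : i = j := Fin.ext heq
      subst this; exact Commute.refl _
    · exact dcc prj h0 h1 hallQ false false i j hgt
  have hBB : ∀ i j, Commute (Bb i) (Bb j) := by
    intro i j
    rcases Nat.lt_trichotomy (i : ℕ) (j : ℕ) with hlt | heq | hgt
    · exact (dcc prj h0 h1 hallQ true true j i hlt).symm
    · have : i = j := Fin.ext heq
      subst this; exact Commute.refl _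
    · exact dcc prj h0 h1 hallQ true true i j hgt
  have hdab : ∀ i, A i * Bb i = Sq * (Sq * (Bb i * A i)) := fun i => dab prj h0 h1 hallQ i
  have hsq2 : Sq ^ (2 : ℤ) = Sq * Sq := by
    rw [show (2 : ℤ) = 1 + 1 from rfl, zpow_add, zpow_one]
  have hsqm2 : Sq ^ (-2 : ℤ) = Sq⁻¹ * Sq⁻¹ := by
    rw [show (-2 : ℤ) = -1 + -1 from rfl, zpow_add, zpow_neg_one]
  have relAB : ∀ i, A i * Bb i = Sq ^ (2 : ℤ) * (Bb i * A i) := by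
    intro i; rw [hdab i, hsq2]; group
  have relBA : ∀ i, Bb i * A i = Sq ^ (-2 : ℤ) * (A i * Bb i) := by
    intro i; rw [hdab i, hsqm2]; group
  have hScanA : ∀ x, Commute Sq (canProd A hAA x) := fun x => canProd_commute A hAA Sq hSA x
  have hScanB : ∀ y, Commute Sq (canProd Bb hBB y) := fun y => canProd_commute Bb hBB Sq hSB y
  have hAcanA : ∀ j x, Commute (A j) (canProd A hAA x) :=
    fun j x => canProd_commute A hAA (A j) (fun i => hAA j i) x
  have hBcanB : ∀ j y, Commute (Bb j) (canProd Bb hBB y) :=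
    fun j y => canProd_commute Bb hBB (Bb j) (fun i => hBB j i) y
  have hBmoveA : ∀ (j : Fin g) (x : Fin g → ℤ),
      Bb j * canProd A hAA x = Sq ^ (-2 * x j) * (canProd A hAA x * Bb j) := by
    intro j x
    have h := canProd_move A hAA (Bb j) (Sq ^ (-2 : ℤ)) j
      (fun i hij => (hABne i j hij).symm)
      ((hSA j).zpow_left (-2)) (relBA j) x
    rwa [← zpow_mul] at h
  have hAmoveB : ∀ (j : Fin g) (c : ℤ) (y : Fin g → ℤ),
      (A j) ^ c * canProd Bb hBB y
        = Sq ^ (2 * (c * y j)) * (canProd Bb hBB y * (A j) ^ c) := by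
    intro j c y
    have hrel : (A j) ^ c * Bb j = (Sq ^ (2 : ℤ)) ^ c * (Bb j * (A j) ^ c) :=
      exchange_aux' ((hSB j).zpow_left 2) ((hSA j).zpow_left 2) (relAB j) c
    have h := canProd_move Bb hBB ((A j) ^ c) ((Sq ^ (2 : ℤ)) ^ c) j
      (fun i hij => ((hABne j i (fun hh => hij hh.symm)).zpow_left c))
      (((hSB j).zpow_left 2).zpow_left c) hrel y
    rwa [← zpow_mul, ← zpow_mul] at h
  have stepS : ∀ (x y : Fin g → ℤ) (k c : ℤ),
      (Sq ^ k * (canProd A hAA x * canProd Bb hBB y)) * Sq ^ c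
        = Sq ^ (k + c) * (canProd A hAA x * canProd Bb hBB y) := by
    intro x y k c
    have hcom : Commute (Sq ^ c) (canProd A hAA x * canProd Bb hBB y) :=
      ((hScanA x).mul_right (hScanB y)).zpow_left c
    calc (Sq ^ k * (canProd A hAA x * canProd Bb hBB y)) * Sq ^ c
        = Sq ^ k * ((canProd A hAA x * canProd Bb hBB y) * Sq ^ c) := by group
      _ = Sq ^ k * (Sq ^ c * (canProd A hAA x * canProd Bb hBB y)) := by rw [← hcom.eq]
      _ = Sq ^ (k + c) * (canProd A hAA x * canProd Bb hBB y) := by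
          rw [← mul_assoc, ← zpow_add]
  have stepB : ∀ (x y : Fin g → ℤ) (k c : ℤ) (j : Fin g),
      (Sq ^ k * (canProd A hAA x * canProd Bb hBB y)) * (Bb j) ^ c
        = Sq ^ k * (canProd A hAA x * canProd Bb hBB (y + Pi.single j c)) := by
    intro x y k c j
    rw [canProd_add_single Bb hBB j c y]
    group
  have stepA : ∀ (x y : Fin g → ℤ) (k c : ℤ) (j : Fin g),
      (Sq ^ k * (canProd A hAA x * canProd Bb hBB y)) * (A j) ^ c
        = Sq ^ (k - 2 * (c * y j)) *
            (canProd A hAA (x + Pi.single j c) * canProd Bb hBB y) := by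
    intro x y k c j
    have h1 : canProd Bb hBB y * (A j) ^ c
        = Sq ^ (-(2 * (c * y j))) * ((A j) ^ c * canProd Bb hBB y) := by
      rw [hAmoveB j c y]; group
    calc (Sq ^ k * (canProd A hAA x * canProd Bb hBB y)) * (A j) ^ c
        = Sq ^ k * (canProd A hAA x * (canProd Bb hBB y * (A j) ^ c)) := by group
      _ = Sq ^ k * (canProd A hAA x *
            (Sq ^ (-(2 * (c * y j))) * ((A j) ^ c * canProd Bb hBB y))) := by rw [h1]
      _ = Sq ^ k * (Sq ^ (-(2 * (c * y j))) *
            (canProd A hAA x * ((A j) ^ c * canProd Bb hBB y))) := by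
          rw [((hScanA x).symm.zpow_right (-(2 * (c * y j)))).left_comm]
      _ = Sq ^ (k + -(2 * (c * y j))) *
            (canProd A hAA x * ((A j) ^ c * canProd Bb hBB y)) := by
          rw [← mul_assoc, ← zpow_add]
      _ = Sq ^ (k - 2 * (c * y j)) *
            ((canProd A hAA x * (A j) ^ c) * canProd Bb hBB y) := by
          rw [← sub_eq_add_neg, ← mul_assoc (canProd A hAA x)]
      _ = Sq ^ (k - 2 * (c * y j)) *
            (canProd A hAA (x + Pi.single j c) * canProd Bb hBB y) := by
          rw [← canProd_add_single A hAA j c x]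
  have hQtop := top_closure_of_surj prj (QuotientGroup.mk'_surjective _)
  have hNF : ∀ q : SurfBraidGroup g n ⧸ Subgroup.lowerCentralSeries (⊤ : Subgroup (SurfBraidGroup g n)) 2,
      ∃ (x y : Fin g → ℤ) (k : ℤ),
        q = Sq ^ k * (canProd A hAA x * canProd Bb hBB y) := by
    intro q
    have hq : q ∈ Subgroup.closure (Set.range fun x : SurfGen g n => prj (.of x)) := by
      rw [hQtop]; exact Subgroup.mem_top q
    refine Subgroup.closure_induction_right
      (p := fun q _ => ∃ (x y : Fin g → ℤ) (k : ℤ),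
        q = Sq ^ k * (canProd A hAA x * canProd Bb hBB y)) ?_ ?_ ?_ hq
    · refine ⟨0, 0, 0, ?_⟩
      rw [canProd_zero, canProd_zero, zpow_zero]
      rw [mul_one, mul_one]
    · rintro w - u ⟨v, rfl⟩ ⟨x, y, k, rfl⟩
      cases v with
      | a j =>
        refine ⟨x + Pi.single j 1, y, k - 2 * (1 * y j), ?_⟩
        have h := stepA x y k 1 j
        rw [zpow_one] at h
        exact h
      | b j =>
        refine ⟨x, y + Pi.single j 1, k, ?_⟩
        have h := stepB x y k 1 j
        rw [zpow_one] at h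
        exact h
      | s j =>
        refine ⟨x, y, k + 1, ?_⟩
        have h := stepS x y k 1
        rw [zpow_one] at h
        simp only [hallQ]
        exact h
    · rintro w - u ⟨v, rfl⟩ ⟨x, y, k, rfl⟩
      cases v with
      | a j =>
        refine ⟨x + Pi.single j (-1), y, k - 2 * ((-1) * y j), ?_⟩
        have h := stepA x y k (-1) j
        rw [zpow_neg_one] at h
        exact h
      | b j =>
        refine ⟨x, y + Pi.single j (-1), k, ?_⟩
        have h := stepB x y k (-1) j
        rw [zpow_neg_one] at h
        exact h
      | s j =>
        refine ⟨x, y, k + (-1), ?_⟩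
        have h := stepS x y k (-1)
        rw [zpow_neg_one] at h
        simp only [hallQ]
        exact h
  -- commutator values
  have combB : ∀ (x y : Fin g → ℤ) (k : ℤ) (j : Fin g),
      ⁅Sq ^ k * (canProd A hAA x * canProd Bb hBB y), Bb j⁆ = Sq ^ (2 * x j) := by
    intro x y k j
    set P := Sq ^ k * (canProd A hAA x * canProd Bb hBB y) with hPdef
    have h2 : canProd A hAA x * Bb j = Sq ^ (2 * x j) * (Bb j * canProd A hAA x) := by
      rw [hBmoveA j x, ← mul_assoc, ← zpow_add,
        show 2 * x j + -2 * x j = 0 by ring, zpow_zero, one_mul]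
    have h1 : P * Bb j = Bb j * (Sq ^ (2 * x j) * P) := by
      calc P * Bb j
          = Sq ^ k * (canProd A hAA x * (canProd Bb hBB y * Bb j)) := by
            rw [hPdef]; group
        _ = Sq ^ k * (canProd A hAA x * (Bb j * canProd Bb hBB y)) := by
            rw [← (hBcanB j y).eq]
        _ = Sq ^ k * ((canProd A hAA x * Bb j) * canProd Bb hBB y) := by
            group
        _ = Sq ^ k * ((Sq ^ (2 * x j) * (Bb j * canProd A hAA x)) * canProd Bb hBB y) := by
            rw [h2]
        _ = Sq ^ k * (Sq ^ (2 * x j) * (Bb j * (canProd A hAA x * canProd Bb hBB y))) := by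
            group
        _ = Sq ^ k * (Bb j * (Sq ^ (2 * x j) * (canProd A hAA x * canProd Bb hBB y))) := by
            rw [((hSB j).zpow_left (2 * x j)).left_comm]
        _ = Bb j * (Sq ^ k * (Sq ^ (2 * x j) * (canProd A hAA x * canProd Bb hBB y))) := by
            rw [((hSB j).zpow_left k).left_comm]
        _ = Bb j * (Sq ^ (2 * x j) * (Sq ^ k * (canProd A hAA x * canProd Bb hBB y))) := by
            rw [((Commute.refl Sq).zpow_zpow k (2 * x j)).left_comm]
        _ = Bb j * (Sq ^ (2 * x j) * P) := by rw [hPdef]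
    rw [commutatorElement_def, h1]
    calc Bb j * (Sq ^ (2 * x j) * P) * P⁻¹ * (Bb j)⁻¹
        = Bb j * Sq ^ (2 * x j) * (Bb j)⁻¹ := by group
      _ = Sq ^ (2 * x j) := by
          rw [((hSB j).zpow_left (2 * x j)).symm.eq]; group
  have combA : ∀ (x y : Fin g → ℤ) (k : ℤ) (j : Fin g),
      ⁅Sq ^ k * (canProd A hAA x * canProd Bb hBB y), A j⁆ = Sq ^ (-(2 * y j)) := by
    intro x y k j
    set P := Sq ^ k * (canProd A hAA x * canProd Bb hBB y) with hPdef
    have h2 : canProd Bb hBB y * A j = Sq ^ (-(2 * y j)) * (A j * canProd Bb hBB y) := by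
      have h := hAmoveB j 1 y
      rw [zpow_one] at h
      rw [h, ← mul_assoc, ← zpow_add,
        show -(2 * y j) + 2 * (1 * y j) = 0 by ring, zpow_zero, one_mul]
    have h1 : P * A j = A j * (Sq ^ (-(2 * y j)) * P) := by
      calc P * A j
          = Sq ^ k * (canProd A hAA x * (canProd Bb hBB y * A j)) := by
            rw [hPdef]; group
        _ = Sq ^ k * (canProd A hAA x * (Sq ^ (-(2 * y j)) * (A j * canProd Bb hBB y))) := by
            rw [h2]
        _ = Sq ^ k * (Sq ^ (-(2 * y j)) * (canProd A hAA x * (A j * canProd Bb hBB y))) := by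
            rw [((hScanA x).symm.zpow_right (-(2 * y j))).left_comm]
        _ = Sq ^ k * (Sq ^ (-(2 * y j)) * (A j * (canProd A hAA x * canProd Bb hBB y))) := by
            rw [(hAcanA j x).symm.left_comm]
        _ = Sq ^ k * (A j * (Sq ^ (-(2 * y j)) * (canProd A hAA x * canProd Bb hBB y))) := by
            rw [((hSA j).zpow_left (-(2 * y j))).left_comm]
        _ = A j * (Sq ^ k * (Sq ^ (-(2 * y j)) * (canProd A hAA x * canProd Bb hBB y))) := by
            rw [((hSA j).zpow_left k).left_comm]
        _ = A j * (Sq ^ (-(2 * y j)) * (Sq ^ k * (canProd A hAA x * canProd Bb hBB y))) := by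
            rw [((Commute.refl Sq).zpow_zpow k (-(2 * y j))).left_comm]
        _ = A j * (Sq ^ (-(2 * y j)) * P) := by rw [hPdef]
    rw [commutatorElement_def, h1]
    calc A j * (Sq ^ (-(2 * y j)) * P) * P⁻¹ * (A j)⁻¹
        = A j * Sq ^ (-(2 * y j)) * (A j)⁻¹ := by group
      _ = Sq ^ (-(2 * y j)) := by
          rw [((hSA j).zpow_left (-(2 * y j))).symm.eq]; group
  -- from prj v = Sq ^ c deduce lam v = s0 ^ c
  have keyS : ∀ (v : SurfBraidGroup g n) (c : ℤ), prj v = Sq ^ c → lam v = s0 ^ c := by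
    intro v c hv
    have h2 : prj (v * ((PresentedGroup.of (SurfGen.s ⟨0, h0⟩) : SurfBraidGroup g n) ^ c)⁻¹)
        = 1 := by
      rw [map_mul, map_inv, map_zpow, hv, ← hSqdef, mul_inv_eq_one]
    have hmem := (QuotientGroup.eq_one_iff _).mp h2
    have h3 := hΓk hmem
    rw [MonoidHom.mem_ker, map_mul, map_inv, map_zpow, mul_inv_eq_one] at h3
    exact h3
  have hkerle : lam.ker ≤ Subgroup.lowerCentralSeries (⊤ : Subgroup (SurfBraidGroup g n)) 2 := by
    intro w hw
    have hw1 : lam w = 1 := MonoidHom.mem_ker.mp hw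
    obtain ⟨x, y, k, hPw⟩ := hNF (prj w)
    have hx : ∀ j, x j = 0 := by
      intro j
      have hπu : prj ⁅w, (PresentedGroup.of (SurfGen.b j) : SurfBraidGroup g n)⁆
          = Sq ^ (2 * x j) := by
        rw [map_commutatorElement, hPw]
        exact combB x y k j
      have hlamu : lam ⁅w, (PresentedGroup.of (SurfGen.b j) : SurfBraidGroup g n)⁆ = 1 := by
        rw [map_commutatorElement, commutatorElement_def, hw1]
        simp
      have hks := keyS _ _ hπu
      rw [hlamu] at hks
      have h5 := hord _ hks.symm
      omega
    have hy : ∀ j, y j = 0 := by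
      intro j
      have hπu : prj ⁅w, (PresentedGroup.of (SurfGen.a j) : SurfBraidGroup g n)⁆
          = Sq ^ (-(2 * y j)) := by
        rw [map_commutatorElement, hPw]
        exact combA x y k j
      have hlamu : lam ⁅w, (PresentedGroup.of (SurfGen.a j) : SurfBraidGroup g n)⁆ = 1 := by
        rw [map_commutatorElement, commutatorElement_def, hw1]
        simp
      have hks := keyS _ _ hπu
      rw [hlamu] at hks
      have h5 := hord _ hks.symm
      omega
    have hx0 : x = 0 := funext hx
    have hy0 : y = 0 := funext hy
    rw [hx0, hy0, canProd_zero, canProd_zero, mul_one, mul_one] at hPw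
    have hks := keyS w k hPw
    rw [hw1] at hks
    have hk0 := hord _ hks.symm
    rw [hk0, zpow_zero] at hPw
    exact (QuotientGroup.eq_one_iff _).mp hPw
  have hker : lam.ker = Subgroup.lowerCentralSeries (⊤ : Subgroup (SurfBraidGroup g n)) 2 := le_antisymm hkerle hΓk
  refine ⟨(QuotientGroup.quotientKerEquivOfSurjective lam hsurj).symm.trans
    (QuotientGroup.quotientMulEquivOfEq hker), ?_⟩
  refine MonoidHom.ext fun w => ?_
  have he1 : (QuotientGroup.quotientKerEquivOfSurjective lam hsurj).symm (lam w)
      = QuotientGroup.mk w := by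
    apply (QuotientGroup.quotientKerEquivOfSurjective lam hsurj).injective
    rw [MulEquiv.apply_symm_apply]
    rfl
  show QuotientGroup.quotientMulEquivOfEq hker
      ((QuotientGroup.quotientKerEquivOfSurjective lam hsurj).symm (lam w)) = _
  rw [he1, QuotientGroup.quotientMulEquivOfEq_mk]
  rfl
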